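/- In the bijection θ of Lemma 1 (gluing a pair (u₁, u₂) of unicellular maps of genera g₁, g₂ with j and n−j edges), the number of vertices of θ(u₁,u₂) equals J₁ + J₂ − 2 where J₁, J₂ are the vertex counts of u₁ and u₂ including plants, and the number of edges of θ(u₁,u₂) is n + 1; consequently θ(u₁,u₂) has genus g₁ + g₂. -/

import Mathlib

/-- Number of cycles of a permutation, counting fixed points as trivial cycles. -/
def cycleCount {β : Type*} [Fintype β] [DecidableEq β] (σ : Equiv.Perm β) : ℕ :=
  σ.cycleType.card + (Finset.univ.filter fun x => σ x = x).card

/-- `IsPUMap g n α σ`: `(α, σ)` is a planted unicellular map of genus `g` with `n` edges.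
The `2n+2` half-edges are `Fin (2*n+2)`, listed in boundary order: index `0` is the root
half-edge `1_R`, index `i` (for `1 ≤ i ≤ 2n`) is the half-edge labelled `i`, and index
`2n+1` is the plant half-edge `2n_R`.  `α` is a fixed-point-free involution containing
the rainbow cycle `(1_R, 2n_R)`, the boundary (face) permutation `γ = α ∘ σ` is the
single cycle `(1_R, 1, 2, …, 2n, 2n_R)`, i.e. the standard rotation `finRotate`, and the
genus is given by Euler's relation `2 - 2g = (J - 1) - n + 1`, where
`J = cycleCount σ` counts the vertices of the map including the plant. -/
def IsPUMap (g n : ℕ) (α σ : Equiv.Perm (Fin (2 * n + 2))) : Prop :=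
  (∀ x, α (α x) = x) ∧ (∀ x, α x ≠ x) ∧
  α ⟨0, by omega⟩ = ⟨2 * n + 1, by omega⟩ ∧
  α * σ = finRotate (2 * n + 2) ∧
  ((cycleCount σ : ℤ) - 1) - n + 1 = 2 - 2 * (g : ℤ)

/-- A planted unicellular map of genus `g` with `n` edges. -/
structure PUMap (g n : ℕ) where
  α : Equiv.Perm (Fin (2 * n + 2))
  σ : Equiv.Perm (Fin (2 * n + 2))
  prop : IsPUMap g n α σ

/-- The embedding of the half-edges of the second map `u₂` into the glued map. -/
def glue2 (k : ℕ) (i : ℕ) : ℕ := if i = 0 then 0 else i + (2 * k + 2)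

section helpers

open Equiv Equiv.Perm Finset

variable {β : Type*} [Fintype β] [DecidableEq β]

lemma cycleCount_add_card_support (σ : Perm β) :
    cycleCount σ + σ.support.card = σ.cycleType.card + Fintype.card β := by
  have hs : σ.support = Finset.univ.filter fun x => ¬ σ x = x := by
    ext a; simp [Equiv.Perm.mem_support]
  have h : (Finset.univ.filter fun x => σ x = x).card + σ.support.card = Fintype.card β := by
    rw [hs, Finset.card_filter_add_card_filter_not, Finset.card_univ]
  unfold cycleCount; omega

lemma cycleCount_disjoint_mul {σ τ : Perm β} (h : σ.Disjoint τ) :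
    cycleCount (σ * τ) + Fintype.card β = cycleCount σ + cycleCount τ := by
  have h1 := cycleCount_add_card_support (σ * τ)
  have h2 := cycleCount_add_card_support σ
  have h3 := cycleCount_add_card_support τ
  rw [h.cycleType_mul, h.card_support_mul, Multiset.card_add] at h1
  have hb1 : σ.support.card ≤ Fintype.card β := by
    simpa using Finset.card_le_univ σ.support
  have hb2 : τ.support.card ≤ Fintype.card β := by
    simpa using Finset.card_le_univ τ.support
  omega

lemma cycleCount_extendDomain {α : Type*} [Fintype α] [DecidableEq α] {p : β → Prop}
    [DecidablePred p] (f : α ≃ Subtype p) (g : Perm α) :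
    cycleCount (g.extendDomain f) + Fintype.card α = cycleCount g + Fintype.card β := by
  have h1 := cycleCount_add_card_support (g.extendDomain f)
  have h2 := cycleCount_add_card_support g
  rw [Equiv.Perm.cycleType_extendDomain, Equiv.Perm.card_support_extend_domain] at h1
  have hb : g.support.card ≤ Fintype.card α := by
    simpa using Finset.card_le_univ g.support
  omega

lemma cycleType_card_eq (σ : Perm β) : σ.cycleType.card = σ.cycleFactorsFinset.card := by
  rw [Equiv.Perm.cycleType_def, Multiset.card_map]; rfl

lemma cycleCount_mul_swap (σ : Perm β) {a b : β} (hab : a ≠ b) (ha : σ a = a) :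
    cycleCount (σ * Equiv.swap a b) + 1 = cycleCount σ := by
  set τ := σ * Equiv.swap a b with hτdef
  have hτb : τ b = a := by simp [hτdef, Equiv.swap_apply_right, ha]
  have hτa : τ a = σ b := by simp [hτdef, Equiv.swap_apply_left]
  have hτx : ∀ x, x ≠ a → x ≠ b → τ x = σ x := fun x hx1 hx2 => by
    simp [hτdef, Equiv.swap_apply_of_ne_of_ne hx1 hx2]
  have h1 := cycleCount_add_card_support τ
  have h2 := cycleCount_add_card_support σ
  have hbτ : τ.support.card ≤ Fintype.card β := by
    simpa using Finset.card_le_univ τ.support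
  by_cases hb : σ b = b
  · have hd : σ.Disjoint (Equiv.swap a b) := by
      intro x
      by_cases h1 : x = a
      · left; rw [h1, ha]
      by_cases h2 : x = b
      · left; rw [h2, hb]
      · right; exact Equiv.swap_apply_of_ne_of_ne h1 h2
    have hct : τ.cycleType = σ.cycleType + (Equiv.swap a b).cycleType := hd.cycleType_mul
    have hsw : (Equiv.swap a b).cycleType = {2} := by
      rw [(Equiv.Perm.isCycle_swap hab).cycleType, Equiv.Perm.card_support_swap hab]
    have hsc : τ.support.card = σ.support.card + 2 := by
      rw [hτdef, hd.card_support_mul, Equiv.Perm.card_support_swap hab]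
    rw [hct, hsw, Multiset.card_add] at h1
    simp only [Multiset.card_singleton] at h1
    omega
  · have hba : σ b ≠ a := fun h => hab (σ.injective (h.trans ha.symm)).symm
    have hanotsupp : a ∉ σ.support := by simp [Equiv.Perm.mem_support, ha]
    have hbsupp : b ∈ σ.support := by simpa [Equiv.Perm.mem_support] using hb
    have hbτsupp : b ∈ τ.support := by
      simp only [Equiv.Perm.mem_support, hτb]; intro h; exact hab h
    have hsupp : τ.support = insert a σ.support := by
      ext x
      simp only [Equiv.Perm.mem_support, Finset.mem_insert]
      by_cases h1 : x = a
      · subst h1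
        constructor
        · intro _; exact Or.inl rfl
        · intro _; rw [hτa]; exact hba
      by_cases h2 : x = b
      · subst h2
        constructor
        · intro _; exact Or.inr hb
        · intro _; rw [hτb]; intro h; exact hab h
      · rw [hτx x h1 h2]
        constructor
        · intro h; exact Or.inr h
        · rintro (h | h); exact absurd h h1; exact h
    have hsc : τ.support.card = σ.support.card + 1 := by
      rw [hsupp, Finset.card_insert_of_notMem hanotsupp]
    have hbcycb : b ∈ (τ.cycleOf b).support :=
      Equiv.Perm.mem_support_cycleOf_iff.mpr ⟨Equiv.Perm.SameCycle.refl _ _, hbτsupp⟩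
    have hfc : σ.cycleFactorsFinset.card = τ.cycleFactorsFinset.card := by
      apply Finset.card_bij (fun c _ => if b ∈ c.support then τ.cycleOf b else c)
      · intro c hc
        by_cases hbc : b ∈ c.support
        · rw [if_pos hbc]
          exact Equiv.Perm.cycleOf_mem_cycleFactorsFinset_iff.mpr hbτsupp
        · rw [if_neg hbc]
          rw [Equiv.Perm.mem_cycleFactorsFinset_iff] at hc ⊢
          refine ⟨hc.1, fun x hx => ?_⟩
          have hxa : x ≠ a := fun h => hanotsupp (by
            exact Equiv.Perm.mem_cycleFactorsFinset_support_le
              (Equiv.Perm.mem_cycleFactorsFinset_iff.mpr hc) (h ▸ hx))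
          have hxb : x ≠ b := fun h => hbc (h ▸ hx)
          rw [hc.2 x hx, ← hτx x hxa hxb]
      · intro c₁ hc₁ c₂ hc₂ heq
        by_cases h1 : b ∈ c₁.support <;> by_cases h2 : b ∈ c₂.support
        · rw [Equiv.Perm.cycle_is_cycleOf h1 hc₁, Equiv.Perm.cycle_is_cycleOf h2 hc₂]
        · rw [if_pos h1, if_neg h2] at heq
          exact absurd (heq ▸ hbcycb) h2
        · rw [if_neg h1, if_pos h2] at heq
          exact absurd (heq.symm ▸ hbcycb) h1
        · rwa [if_neg h1, if_neg h2] at heq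
      · intro d hd
        by_cases hbd : b ∈ d.support
        · refine ⟨σ.cycleOf b, Equiv.Perm.cycleOf_mem_cycleFactorsFinset_iff.mpr hbsupp, ?_⟩
          have hmem : b ∈ (σ.cycleOf b).support :=
            Equiv.Perm.mem_support_cycleOf_iff.mpr ⟨Equiv.Perm.SameCycle.refl _ _, hbsupp⟩
          rw [if_pos hmem]
          exact (Equiv.Perm.cycle_is_cycleOf hbd hd).symm
        · have had : a ∉ d.support := by
            intro h
            have h1 : d = τ.cycleOf a := Equiv.Perm.cycle_is_cycleOf h hd
            have h2 : τ.SameCycle b a := ⟨1, by simpa using hτb⟩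
            have h3 : τ.cycleOf b = τ.cycleOf a := h2.cycleOf_eq
            exact hbd (by rw [h1, ← h3]; exact hbcycb)
          have hdσ : d ∈ σ.cycleFactorsFinset := by
            rw [Equiv.Perm.mem_cycleFactorsFinset_iff] at hd ⊢
            refine ⟨hd.1, fun x hx => ?_⟩
            have hxa : x ≠ a := fun h => had (h ▸ hx)
            have hxb : x ≠ b := fun h => hbd (h ▸ hx)
            rw [hd.2 x hx, hτx x hxa hxb]
          exact ⟨d, hdσ, by rw [if_neg hbd]⟩
    have hctc : τ.cycleType.card = σ.cycleType.card := by
      rw [cycleType_card_eq, cycleType_card_eq, hfc]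
    omega

end helpers

lemma glue2_lt {j n : ℕ} (hj : j ≤ n) {i : ℕ} (hi : i < 2 * (n - j) + 2) :
    glue2 j i < 2 * (n + 1) + 2 := by unfold glue2; split <;> omega

lemma glue2_inj (j : ℕ) {a b : ℕ} (h : glue2 j a = glue2 j b) : a = b := by
  unfold glue2 at h; split at h <;> split at h <;> omega

lemma finRotate_val {m : ℕ} (x : Fin (m + 1)) :
    ((finRotate (m + 1) x : Fin (m + 1)) : ℕ) = if (x : ℕ) = m then 0 else (x : ℕ) + 1 := by
  rw [finRotate_succ_apply]
  rcases eq_or_ne (x : ℕ) m with h | h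
  · have hx : x = Fin.last m := Fin.ext h
    simp [hx, h]
  · have hx : x ≠ Fin.last m := fun hh => h (by rw [hh]; rfl)
    rw [Fin.val_add_one]
    simp [hx, h]

def emb1 (j n : ℕ) (hj : j ≤ n) :
    Fin (2 * j + 2) ≃ {y : Fin (2 * (n + 1) + 2) // 1 ≤ (y : ℕ) ∧ (y : ℕ) ≤ 2 * j + 2} where
  toFun i := ⟨⟨(i : ℕ) + 1, by have := i.isLt; omega⟩, by
    have := i.isLt
    show 1 ≤ (i : ℕ) + 1 ∧ (i : ℕ) + 1 ≤ 2 * j + 2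
    omega⟩
  invFun y := ⟨(y.1 : ℕ) - 1, by have := y.2; omega⟩
  left_inv i := by
    apply Fin.ext
    show (i : ℕ) + 1 - 1 = (i : ℕ)
    omega
  right_inv y := by
    apply Subtype.ext; apply Fin.ext
    have := y.2
    show (y.1 : ℕ) - 1 + 1 = (y.1 : ℕ)
    omega

def emb2 (j n : ℕ) (hj : j ≤ n) :
    Fin (2 * (n - j) + 2) ≃ {y : Fin (2 * (n + 1) + 2) // (y : ℕ) = 0 ∨ 2 * j + 3 ≤ (y : ℕ)} where
  toFun i := ⟨⟨glue2 j (i : ℕ), glue2_lt hj i.isLt⟩, by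
    show glue2 j (i : ℕ) = 0 ∨ 2 * j + 3 ≤ glue2 j (i : ℕ)
    unfold glue2; split <;> omega⟩
  invFun y := ⟨(y.1 : ℕ) - (2 * j + 2), by
    have h1 := y.1.isLt; have h2 := y.2
    omega⟩
  left_inv i := by
    apply Fin.ext
    have := i.isLt
    show glue2 j (i : ℕ) - (2 * j + 2) = (i : ℕ)
    unfold glue2; split <;> omega
  right_inv y := by
    apply Subtype.ext; apply Fin.ext
    have h2 := y.2
    show glue2 j ((y.1 : ℕ) - (2 * j + 2)) = (y.1 : ℕ)
    unfold glue2; split <;> omega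

lemma emb1_val {j n : ℕ} (hj : j ≤ n) (i : Fin (2 * j + 2)) :
    ((emb1 j n hj i : Fin (2 * (n + 1) + 2)) : ℕ) = (i : ℕ) + 1 := rfl

lemma emb2_val {j n : ℕ} (hj : j ≤ n) (i : Fin (2 * (n - j) + 2)) :
    ((emb2 j n hj i : Fin (2 * (n + 1) + 2)) : ℕ) = glue2 j (i : ℕ) := rfl

set_option maxHeartbeats 2000000 in
/-- In the bijection `θ` of Lemma 1, gluing a pair `(u₁, u₂)` of planted
unicellular maps of genera `g₁, g₂` with `j` and `n-j` edges (hypotheses `hA₁`, `hA₂`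
express the gluing on half-edges, as in Statement 5; the glued vertex permutation is
`S = A⁻¹ * finRotate`), the number of vertices of `θ(u₁,u₂)` (not counting its plant)
equals `J₁ + J₂ - 2`, where `J₁ = cycleCount u₁.σ` and `J₂ = cycleCount u₂.σ` are the
vertex counts of `u₁` and `u₂` including their plants; the number of edges of
`θ(u₁,u₂)` is `n+1` (it is a map on `2(n+1)+2` half-edges); consequently `θ(u₁,u₂)` is
a planted unicellular map of genus `g₁ + g₂`. -/
theorem stmt17 (n j g₁ g₂ : ℕ) (hj : j ≤ n)
    (u₁ : PUMap g₁ j) (u₂ : PUMap g₂ (n - j))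
    (A : Equiv.Perm (Fin (2 * (n + 1) + 2)))
    (hA₁ : ∀ (i : Fin (2 * j + 2)) (x y : Fin (2 * (n + 1) + 2)),
      (x : ℕ) = (i : ℕ) + 1 → (y : ℕ) = (u₁.α i : ℕ) + 1 → A x = y)
    (hA₂ : ∀ (i : Fin (2 * (n - j) + 2)) (x y : Fin (2 * (n + 1) + 2)),
      (x : ℕ) = glue2 j i → (y : ℕ) = glue2 j (u₂.α i) → A x = y) :
    cycleCount (A⁻¹ * finRotate (2 * (n + 1) + 2)) - 1 =
        cycleCount u₁.σ + cycleCount u₂.σ - 2 ∧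
      IsPUMap (g₁ + g₂) (n + 1) A (A⁻¹ * finRotate (2 * (n + 1) + 2)) := by
  obtain ⟨h1inv, h1ff, h1root, h1face, h1euler⟩ := u₁.prop
  obtain ⟨h2inv, h2ff, h2root, h2face, h2euler⟩ := u₂.prop
  -- rotation value lemmas
  have hrot1 : ∀ x : Fin (2 * j + 2), ((finRotate (2 * j + 2) x : Fin (2 * j + 2)) : ℕ)
      = if (x : ℕ) = 2 * j + 1 then 0 else (x : ℕ) + 1 := fun x => finRotate_val (m := 2 * j + 1) x
  have hrot2 : ∀ x : Fin (2 * (n - j) + 2),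
      ((finRotate (2 * (n - j) + 2) x : Fin (2 * (n - j) + 2)) : ℕ)
      = if (x : ℕ) = 2 * (n - j) + 1 then 0 else (x : ℕ) + 1 :=
    fun x => finRotate_val (m := 2 * (n - j) + 1) x
  have hrotN : ∀ x : Fin (2 * (n + 1) + 2),
      ((finRotate (2 * (n + 1) + 2) x : Fin (2 * (n + 1) + 2)) : ℕ)
      = if (x : ℕ) = 2 * n + 3 then 0 else (x : ℕ) + 1 :=
    fun x => finRotate_val (m := 2 * n + 3) x
  -- σ in terms of α
  have hσ1 : ∀ x : Fin (2 * j + 2), u₁.σ x = u₁.α (finRotate (2 * j + 2) x) := by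
    intro x
    have h := congrArg (fun (p : Equiv.Perm (Fin (2 * j + 2))) => p x) h1face
    simp only [Equiv.Perm.mul_apply] at h
    calc u₁.σ x = u₁.α (u₁.α (u₁.σ x)) := (h1inv _).symm
    _ = u₁.α (finRotate (2 * j + 2) x) := by rw [h]
  have hσ2 : ∀ x : Fin (2 * (n - j) + 2), u₂.σ x = u₂.α (finRotate (2 * (n - j) + 2) x) := by
    intro x
    have h := congrArg (fun (p : Equiv.Perm (Fin (2 * (n - j) + 2))) => p x) h2face
    simp only [Equiv.Perm.mul_apply] at h
    calc u₂.σ x = u₂.α (u₂.α (u₂.σ x)) := (h2inv _).symm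
    _ = u₂.α (finRotate (2 * (n - j) + 2) x) := by rw [h]
  -- value form of the gluing hypotheses
  have hA1' : ∀ (i : Fin (2 * j + 2)) (x : Fin (2 * (n + 1) + 2)), (x : ℕ) = (i : ℕ) + 1 →
      ((A x : Fin (2 * (n + 1) + 2)) : ℕ) = ((u₁.α i : Fin (2 * j + 2)) : ℕ) + 1 := by
    intro i x hx
    have hb : ((u₁.α i : Fin (2 * j + 2)) : ℕ) + 1 < 2 * (n + 1) + 2 := by
      have := (u₁.α i).isLt; omega
    rw [hA₁ i x ⟨_, hb⟩ hx rfl]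
  have hA2' : ∀ (i : Fin (2 * (n - j) + 2)) (x : Fin (2 * (n + 1) + 2)),
      (x : ℕ) = glue2 j (i : ℕ) →
      ((A x : Fin (2 * (n + 1) + 2)) : ℕ) = glue2 j ((u₂.α i : Fin (2 * (n - j) + 2)) : ℕ) := by
    intro i x hx
    have hb : glue2 j ((u₂.α i : Fin (2 * (n - j) + 2)) : ℕ) < 2 * (n + 1) + 2 :=
      glue2_lt hj (u₂.α i).isLt
    rw [hA₂ i x ⟨_, hb⟩ hx rfl]
  -- A is a fixed-point-free involution with A 0 = 2n+3
  have hAinv : ∀ x : Fin (2 * (n + 1) + 2), A (A x) = x := by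
    intro x
    have hxlt := x.isLt
    by_cases hx : 1 ≤ (x : ℕ) ∧ (x : ℕ) ≤ 2 * j + 2
    · have e1 : (x : ℕ) = ((⟨(x : ℕ) - 1, by omega⟩ : Fin (2 * j + 2)) : ℕ) + 1 := by
        simp only [Fin.val_mk]; omega
      have h1 := hA1' _ x e1
      have h2 := hA1' _ (A x) h1
      rw [h1inv] at h2
      apply Fin.ext
      simp only [Fin.val_mk] at h2 e1
      omega
    · have e2 : (x : ℕ) = glue2 j ((⟨(x : ℕ) - (2 * j + 2), by omega⟩ :
          Fin (2 * (n - j) + 2)) : ℕ) := by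
        simp only [Fin.val_mk]
        unfold glue2; split <;> omega
      have h1 := hA2' _ x e2
      have h2 := hA2' _ (A x) h1
      rw [h2inv] at h2
      apply Fin.ext
      rw [h2, ← e2]
  have hAff : ∀ x : Fin (2 * (n + 1) + 2), A x ≠ x := by
    intro x hEq
    have hxlt := x.isLt
    have hv := congrArg Fin.val hEq
    by_cases hx : 1 ≤ (x : ℕ) ∧ (x : ℕ) ≤ 2 * j + 2
    · have e1 : (x : ℕ) = ((⟨(x : ℕ) - 1, by omega⟩ : Fin (2 * j + 2)) : ℕ) + 1 := by
        simp only [Fin.val_mk]; omega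
      have h1 := hA1' _ x e1
      refine h1ff (⟨(x : ℕ) - 1, by omega⟩ : Fin (2 * j + 2)) (Fin.ext ?_)
      simp only [Fin.val_mk] at h1 e1 ⊢
      omega
    · have e2 : (x : ℕ) = glue2 j ((⟨(x : ℕ) - (2 * j + 2), by omega⟩ :
          Fin (2 * (n - j) + 2)) : ℕ) := by
        simp only [Fin.val_mk]
        unfold glue2; split <;> omega
      have h1 := hA2' _ x e2
      refine h2ff (⟨(x : ℕ) - (2 * j + 2), by omega⟩ : Fin (2 * (n - j) + 2)) (Fin.ext ?_)
      have hg : glue2 j ((u₂.α (⟨(x : ℕ) - (2 * j + 2), by omega⟩ : Fin (2 * (n - j) + 2))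
          : Fin (2 * (n - j) + 2)) : ℕ)
          = glue2 j (((⟨(x : ℕ) - (2 * j + 2), by omega⟩ : Fin (2 * (n - j) + 2))) : ℕ) := by
        exact (h1.symm.trans hv).trans e2
      exact glue2_inj j hg
  have hAmul : A * A = 1 := Equiv.ext fun x => hAinv x
  have hAeq : A⁻¹ = A := inv_eq_of_mul_eq_one_right hAmul
  have h2rootv : ((u₂.α ⟨0, by omega⟩ : Fin (2 * (n - j) + 2)) : ℕ) = 2 * (n - j) + 1 := by
    rw [h2root]
  have h1rootv : ((u₁.α ⟨0, by omega⟩ : Fin (2 * j + 2)) : ℕ) = 2 * j + 1 := by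
    rw [h1root]
  have hA0v : ((A ⟨0, by omega⟩ : Fin (2 * (n + 1) + 2)) : ℕ) = 2 * n + 3 := by
    have e : ((⟨0, by omega⟩ : Fin (2 * (n + 1) + 2)) : ℕ)
        = glue2 j ((⟨0, by omega⟩ : Fin (2 * (n - j) + 2)) : ℕ) := by
      simp [glue2]
    have h := hA2' _ _ e
    rw [h2rootv] at h
    rw [h]
    unfold glue2; split <;> omega
  -- hoisted bound proofs
  have hp10 : 0 < 2 * j + 2 := by omega
  have hp1last : 2 * j + 1 < 2 * j + 2 := by omega
  have hp20 : 0 < 2 * (n - j) + 2 := by omega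
  have hp21 : 1 < 2 * (n - j) + 2 := by omega
  have hp2last : 2 * (n - j) + 1 < 2 * (n - j) + 2 := by omega
  have hpN0 : 0 < 2 * (n + 1) + 2 := by omega
  have hpN1 : 1 < 2 * (n + 1) + 2 := by omega
  have hpNc : 2 * j + 2 < 2 * (n + 1) + 2 := by omega
  have hpNc3 : 2 * j + 3 < 2 * (n + 1) + 2 := by omega
  -- plants are fixed
  have hfix1 : u₁.σ ⟨2 * j + 1, hp1last⟩ = ⟨2 * j + 1, hp1last⟩ := by
    have h0 : finRotate (2 * j + 2) (⟨2 * j + 1, hp1last⟩ : Fin (2 * j + 2))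
        = ⟨0, hp10⟩ := by
      apply Fin.ext
      have := hrot1 ⟨2 * j + 1, hp1last⟩
      simp only [Fin.val_mk] at this ⊢
      rw [this]
      simp
    rw [hσ1, h0, h1root]
  have hfix2 : u₂.σ ⟨2 * (n - j) + 1, hp2last⟩ = ⟨2 * (n - j) + 1, hp2last⟩ := by
    have h0 : finRotate (2 * (n - j) + 2) (⟨2 * (n - j) + 1, hp2last⟩ : Fin (2 * (n - j) + 2))
        = ⟨0, hp20⟩ := by
      apply Fin.ext
      have := hrot2 ⟨2 * (n - j) + 1, hp2last⟩
      simp only [Fin.val_mk] at this ⊢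
      rw [this]
      simp
    rw [hσ2, h0, h2root]
  have hJ1 : 1 ≤ cycleCount u₁.σ := by
    have hmem : (⟨2 * j + 1, hp1last⟩ : Fin (2 * j + 2)) ∈
        Finset.univ.filter (fun x => u₁.σ x = x) :=
      Finset.mem_filter.mpr ⟨Finset.mem_univ _, hfix1⟩
    have hpos : 0 < (Finset.univ.filter (fun x => u₁.σ x = x)).card :=
      Finset.card_pos.mpr ⟨_, hmem⟩
    unfold cycleCount; omega
  have hJ2 : 1 ≤ cycleCount u₂.σ := by
    have hmem : (⟨2 * (n - j) + 1, hp2last⟩ : Fin (2 * (n - j) + 2)) ∈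
        Finset.univ.filter (fun x => u₂.σ x = x) :=
      Finset.mem_filter.mpr ⟨Finset.mem_univ _, hfix2⟩
    have hpos : 0 < (Finset.univ.filter (fun x => u₂.σ x = x)).card :=
      Finset.card_pos.mpr ⟨_, hmem⟩
    unfold cycleCount; omega
  -- extendDomain facts
  have hT₁out : ∀ y : Fin (2 * (n + 1) + 2), ¬(1 ≤ (y : ℕ) ∧ (y : ℕ) ≤ 2 * j + 2) →
      u₁.σ.extendDomain (emb1 j n hj) y = y :=
    fun y hy => Equiv.Perm.extendDomain_apply_not_subtype _ _ hy
  have hT₂out : ∀ y : Fin (2 * (n + 1) + 2), ¬((y : ℕ) = 0 ∨ 2 * j + 3 ≤ (y : ℕ)) →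
      u₂.σ.extendDomain (emb2 j n hj) y = y :=
    fun y hy => Equiv.Perm.extendDomain_apply_not_subtype _ _ hy
  have hT₁in : ∀ i : Fin (2 * j + 2),
      u₁.σ.extendDomain (emb1 j n hj) (emb1 j n hj i : Fin (2 * (n + 1) + 2))
        = (emb1 j n hj (u₁.σ i) : Fin (2 * (n + 1) + 2)) :=
    fun i => Equiv.Perm.extendDomain_apply_image _ _ _
  have hT₂in : ∀ i : Fin (2 * (n - j) + 2),
      u₂.σ.extendDomain (emb2 j n hj) (emb2 j n hj i : Fin (2 * (n + 1) + 2))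
        = (emb2 j n hj (u₂.σ i) : Fin (2 * (n + 1) + 2)) :=
    fun i => Equiv.Perm.extendDomain_apply_image _ _ _
  have hT₁c₀ : u₁.σ.extendDomain (emb1 j n hj)
      (⟨2 * j + 2, hpNc⟩ : Fin (2 * (n + 1) + 2)) = ⟨2 * j + 2, hpNc⟩ := by
    have hc₀e : (⟨2 * j + 2, hpNc⟩ : Fin (2 * (n + 1) + 2))
        = (emb1 j n hj ⟨2 * j + 1, hp1last⟩ : Fin (2 * (n + 1) + 2)) := by
      apply Fin.ext
      rw [emb1_val]
    rw [hc₀e, hT₁in, hfix1]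
  -- the helper for inequality of Fin mk's
  have hne : ∀ (x : Fin (2 * (n + 1) + 2)) (a : ℕ) (ha : a < 2 * (n + 1) + 2),
      (x : ℕ) ≠ a → x ≠ (⟨a, ha⟩ : Fin (2 * (n + 1) + 2)) :=
    fun x a ha h hEq => h (by rw [hEq])
  -- the conjugation identity
  have hS : A⁻¹ * finRotate (2 * (n + 1) + 2)
      = (u₁.σ.extendDomain (emb1 j n hj) * u₂.σ.extendDomain (emb2 j n hj))
        * Equiv.swap (⟨2 * j + 2, hpNc⟩ : Fin (2 * (n + 1) + 2)) ⟨0, hpN0⟩ := by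
    rw [hAeq]
    apply Equiv.ext
    intro x
    have hxlt := x.isLt
    show A (finRotate (2 * (n + 1) + 2) x)
      = u₁.σ.extendDomain (emb1 j n hj) (u₂.σ.extendDomain (emb2 j n hj)
          (Equiv.swap (⟨2 * j + 2, hpNc⟩ : Fin (2 * (n + 1) + 2)) ⟨0, hpN0⟩ x))
    by_cases hx0 : (x : ℕ) = 0
    · -- x = 0 : both sides are 2j+2
      have hxz : x = (⟨0, hpN0⟩ : Fin (2 * (n + 1) + 2)) := Fin.ext hx0
      rw [hxz, Equiv.swap_apply_right]
      rw [hT₂out ⟨2 * j + 2, hpNc⟩ (by simp only [Fin.val_mk]; omega)]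
      rw [hT₁c₀]
      have hr : finRotate (2 * (n + 1) + 2) (⟨0, hpN0⟩ : Fin (2 * (n + 1) + 2))
          = ⟨1, hpN1⟩ := by
        apply Fin.ext
        have := hrotN ⟨0, hpN0⟩
        simp only [Fin.val_mk] at this ⊢
        rw [this, if_neg (by omega)]
      rw [hr]
      have e : ((⟨1, hpN1⟩ : Fin (2 * (n + 1) + 2)) : ℕ)
          = ((⟨0, hp10⟩ : Fin (2 * j + 2)) : ℕ) + 1 := rfl
      have h := hA1' _ _ e
      rw [h1rootv] at h
      apply Fin.ext
      rw [h]
    by_cases hx1 : 1 ≤ (x : ℕ) ∧ (x : ℕ) ≤ 2 * j + 1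
    · have hq1 : (x : ℕ) + 1 < 2 * (n + 1) + 2 := by omega
      have hq2 : (x : ℕ) < 2 * j + 2 := by omega
      have hq3 : (x : ℕ) - 1 < 2 * j + 2 := by omega
      rw [Equiv.swap_apply_of_ne_of_ne (hne x _ _ (by omega)) (hne x _ _ (by omega))]
      rw [hT₂out x (by omega)]
      have hxe : x = (emb1 j n hj ⟨(x : ℕ) - 1, hq3⟩ : Fin (2 * (n + 1) + 2)) := by
        apply Fin.ext
        rw [emb1_val]
        simp only [Fin.val_mk]
        omega
      conv_rhs => rw [hxe, hT₁in]
      have hr : finRotate (2 * (n + 1) + 2) x = ⟨(x : ℕ) + 1, hq1⟩ := by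
        apply Fin.ext
        rw [hrotN, if_neg (by omega)]
      rw [hr]
      have e : ((⟨(x : ℕ) + 1, hq1⟩ : Fin (2 * (n + 1) + 2)) : ℕ)
          = ((⟨(x : ℕ), hq2⟩ : Fin (2 * j + 2)) : ℕ) + 1 := rfl
      have h := hA1' _ _ e
      apply Fin.ext
      rw [h, emb1_val]
      have hs := hσ1 ⟨(x : ℕ) - 1, hq3⟩
      have hrr : finRotate (2 * j + 2) (⟨(x : ℕ) - 1, hq3⟩ : Fin (2 * j + 2))
          = ⟨(x : ℕ), hq2⟩ := by
        apply Fin.ext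
        have := hrot1 ⟨(x : ℕ) - 1, hq3⟩
        simp only [Fin.val_mk] at this ⊢
        rw [this, if_neg (by omega)]
        omega
      rw [hrr] at hs
      rw [hs]
    by_cases hx2 : (x : ℕ) = 2 * j + 2
    · have hxc : x = (⟨2 * j + 2, hpNc⟩ : Fin (2 * (n + 1) + 2)) := Fin.ext hx2
      rw [hxc, Equiv.swap_apply_left]
      have hz₀e : (⟨0, hpN0⟩ : Fin (2 * (n + 1) + 2))
          = (emb2 j n hj ⟨0, hp20⟩ : Fin (2 * (n + 1) + 2)) := by
        apply Fin.ext
        rw [emb2_val]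
        simp [glue2]
      rw [hz₀e, hT₂in]
      rw [hT₁out _ (by
        rw [emb2_val]
        unfold glue2; split <;> simp only [not_and, not_le] <;> omega)]
      have hr : finRotate (2 * (n + 1) + 2) (⟨2 * j + 2, hpNc⟩ : Fin (2 * (n + 1) + 2))
          = ⟨2 * j + 3, hpNc3⟩ := by
        apply Fin.ext
        have := hrotN ⟨2 * j + 2, hpNc⟩
        simp only [Fin.val_mk] at this ⊢
        rw [this, if_neg (by omega)]
      rw [hr]
      have e : ((⟨2 * j + 3, hpNc3⟩ : Fin (2 * (n + 1) + 2)) : ℕ)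
          = glue2 j ((⟨1, hp21⟩ : Fin (2 * (n - j) + 2)) : ℕ) := by
        simp only [Fin.val_mk]
        unfold glue2
        rw [if_neg (by omega)]
        omega
      have h := hA2' _ _ e
      apply Fin.ext
      rw [h, emb2_val]
      have hs := hσ2 ⟨0, hp20⟩
      have hrr : finRotate (2 * (n - j) + 2) (⟨0, hp20⟩ : Fin (2 * (n - j) + 2))
          = ⟨1, hp21⟩ := by
        apply Fin.ext
        have := hrot2 ⟨0, hp20⟩
        simp only [Fin.val_mk] at this ⊢
        rw [this, if_neg (by omega)]
      rw [hrr] at hs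
      rw [hs]
    by_cases hx3 : 2 * j + 3 ≤ (x : ℕ) ∧ (x : ℕ) ≤ 2 * n + 2
    · have hq1 : (x : ℕ) + 1 < 2 * (n + 1) + 2 := by omega
      have hq4 : (x : ℕ) - (2 * j + 2) < 2 * (n - j) + 2 := by omega
      have hq5 : (x : ℕ) - (2 * j + 2) + 1 < 2 * (n - j) + 2 := by omega
      rw [Equiv.swap_apply_of_ne_of_ne (hne x _ _ (by omega)) (hne x _ _ (by omega))]
      have hxe : x = (emb2 j n hj ⟨(x : ℕ) - (2 * j + 2), hq4⟩
          : Fin (2 * (n + 1) + 2)) := by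
        apply Fin.ext
        rw [emb2_val]
        simp only [Fin.val_mk]
        unfold glue2
        rw [if_neg (by omega)]
        omega
      conv_rhs => rw [hxe, hT₂in]
      rw [hT₁out _ (by
        rw [emb2_val]
        unfold glue2; split <;> simp only [not_and, not_le] <;> omega)]
      have hr : finRotate (2 * (n + 1) + 2) x = ⟨(x : ℕ) + 1, hq1⟩ := by
        apply Fin.ext
        rw [hrotN, if_neg (by omega)]
      rw [hr]
      have e : ((⟨(x : ℕ) + 1, hq1⟩ : Fin (2 * (n + 1) + 2)) : ℕ)
          = glue2 j ((⟨(x : ℕ) - (2 * j + 2) + 1, hq5⟩ : Fin (2 * (n - j) + 2)) : ℕ) := by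
        simp only [Fin.val_mk]
        unfold glue2
        rw [if_neg (by omega)]
        omega
      have h := hA2' _ _ e
      apply Fin.ext
      rw [h, emb2_val]
      have hs := hσ2 ⟨(x : ℕ) - (2 * j + 2), hq4⟩
      have hrr : finRotate (2 * (n - j) + 2)
          (⟨(x : ℕ) - (2 * j + 2), hq4⟩ : Fin (2 * (n - j) + 2))
          = ⟨(x : ℕ) - (2 * j + 2) + 1, hq5⟩ := by
        apply Fin.ext
        have := hrot2 ⟨(x : ℕ) - (2 * j + 2), hq4⟩
        simp only [Fin.val_mk] at this ⊢
        rw [this, if_neg (by omega)]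
      rw [hrr] at hs
      rw [hs]
    · have hx4 : (x : ℕ) = 2 * n + 3 := by omega
      rw [Equiv.swap_apply_of_ne_of_ne (hne x _ _ (by omega)) (hne x _ _ (by omega))]
      have hxe : x = (emb2 j n hj ⟨2 * (n - j) + 1, hp2last⟩ : Fin (2 * (n + 1) + 2)) := by
        apply Fin.ext
        rw [emb2_val]
        simp only [Fin.val_mk]
        unfold glue2
        rw [if_neg (by omega)]
        omega
      conv_rhs => rw [hxe, hT₂in, hfix2]
      rw [hT₁out _ (by
        rw [emb2_val]
        unfold glue2; split <;> simp only [not_and, not_le] <;> omega)]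
      have hr : finRotate (2 * (n + 1) + 2) x = ⟨0, hpN0⟩ := by
        apply Fin.ext
        rw [hrotN, if_pos hx4]
      rw [hr]
      apply Fin.ext
      rw [hA0v, emb2_val]
      simp only [Fin.val_mk]
      unfold glue2
      rw [if_neg (by omega)]
      omega
  -- counting
  have hc₀fix : (u₁.σ.extendDomain (emb1 j n hj) * u₂.σ.extendDomain (emb2 j n hj))
      (⟨2 * j + 2, hpNc⟩ : Fin (2 * (n + 1) + 2)) = ⟨2 * j + 2, hpNc⟩ := by
    show u₁.σ.extendDomain (emb1 j n hj) (u₂.σ.extendDomain (emb2 j n hj) _) = _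
    rw [hT₂out ⟨2 * j + 2, hpNc⟩ (by simp only [Fin.val_mk]; omega), hT₁c₀]
  have hcz : (⟨2 * j + 2, hpNc⟩ : Fin (2 * (n + 1) + 2)) ≠ ⟨0, hpN0⟩ := by
    intro h
    have := congrArg Fin.val h
    simp only [Fin.val_mk] at this
    omega
  have hkey : cycleCount (A⁻¹ * finRotate (2 * (n + 1) + 2)) + 1
      = cycleCount (u₁.σ.extendDomain (emb1 j n hj) * u₂.σ.extendDomain (emb2 j n hj)) := by
    rw [hS]
    exact cycleCount_mul_swap _ hcz hc₀fix
  have hdisj : (u₁.σ.extendDomain (emb1 j n hj)).Disjoint (u₂.σ.extendDomain (emb2 j n hj)) := by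
    intro x
    by_cases h : 1 ≤ (x : ℕ) ∧ (x : ℕ) ≤ 2 * j + 2
    · right; exact hT₂out x (by omega)
    · left; exact hT₁out x h
  have hBB := cycleCount_disjoint_mul hdisj
  have hE1 := cycleCount_extendDomain (emb1 j n hj) u₁.σ
  have hE2 := cycleCount_extendDomain (emb2 j n hj) u₂.σ
  simp only [Fintype.card_fin] at hBB hE1 hE2
  have hmain : cycleCount (A⁻¹ * finRotate (2 * (n + 1) + 2)) + 1
      = cycleCount u₁.σ + cycleCount u₂.σ := by omega
  refine ⟨by omega, hAinv, hAff, ?_, ?_, ?_⟩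
  · exact Fin.ext (by rw [hA0v]; simp only [Fin.val_mk]; omega)
  · exact mul_inv_cancel_left A _
  · have hcast : (cycleCount (A⁻¹ * finRotate (2 * (n + 1) + 2)) : ℤ) + 1
        = (cycleCount u₁.σ : ℤ) + (cycleCount u₂.σ : ℤ) := by exact_mod_cast hmain
    have hnj : ((n - j : ℕ) : ℤ) = (n : ℤ) - (j : ℤ) := Nat.cast_sub hj
    rw [hnj] at h2euler
    push_cast
    linarith [h1euler, h2euler]
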